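/- Exact integration on the double grid: let M = 2N−1 (componentwise), let A : Y → ℂ be integrable, and let p, q be trigonometric polynomials of degree N. Then ∫_Y A(x) p(x) q(x) dx = ∑_{k∈Z_M} ( ∫_Y A(x) φ_M^k(x) dx ) · p(x_M^k) · q(x_M^k). -/

import Mathlib

open Finset MeasureTheory

noncomputable section

/-- The index set `Z_N = {k ∈ ℤ^d : |k_α| ≤ (N_α−1)/2 for all α}`. -/
def ZN {d : ℕ} (N : Fin d → ℕ) : Finset (Fin d → ℤ) :=
  Finset.Icc (fun α => -(((N α : ℤ) - 1) / 2)) (fun α => ((N α : ℤ) - 1) / 2)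

/-- `|N|_Π = ∏_α N_α`, as a complex number. -/
def NPi {d : ℕ} (N : Fin d → ℕ) : ℂ := ∏ α, (N α : ℂ)

/-- `ω_N^{mk} = exp(2πi ∑_α m_α k_α / N_α)`. -/
def omegaN {d : ℕ} (N : Fin d → ℕ) (m k : Fin d → ℤ) : ℂ :=
  Complex.exp (2 * (Real.pi : ℂ) * Complex.I * ∑ α, ((m α * k α : ℤ) : ℂ) / (N α : ℂ))

/-- The Fourier basis function `φ^k(x) = exp(2πi k·x)`. -/
def trigPhi {d : ℕ} (k : Fin d → ℤ) (x : Fin d → ℝ) : ℂ :=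
  Complex.exp (2 * (Real.pi : ℂ) * Complex.I * ∑ α, (k α : ℂ) * (x α : ℂ))

/-- The fundamental trigonometric polynomial
`φ_N^k(x) = (1/|N|_Π) ∑_{m∈Z_N} ω_N^{−km} φ^m(x)`. -/
def fundTrig {d : ℕ} (N : Fin d → ℕ) (k : Fin d → ℤ) (x : Fin d → ℝ) : ℂ :=
  (1 / NPi N) * ∑ m ∈ ZN N, omegaN N (-k) m * trigPhi m x

/-- The regular grid point `x_N^k = (k_1/N_1, …, k_d/N_d)`. -/
def gridPt {d : ℕ} (N : Fin d → ℕ) (k : Fin d → ℤ) : Fin d → ℝ :=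
  fun α => (k α : ℝ) / (N α : ℝ)

/-- The periodic cell `Y = (−1/2, 1/2)^d ⊆ ℝ^d`. -/
def cellY (d : ℕ) : Set (Fin d → ℝ) :=
  Set.univ.pi fun _ : Fin d => Set.Ioo (-(1 / 2) : ℝ) (1 / 2)

lemma dft_one (n : ℕ) (hodd : Odd n) (t : ℤ) (ht : t.natAbs < n) :
    ∑ j ∈ Finset.Icc (-(((n:ℤ)-1)/2)) (((n:ℤ)-1)/2),
      Complex.exp (2 * (Real.pi:ℂ) * Complex.I * (((j * t : ℤ):ℂ) / (n:ℂ))) =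
    if t = 0 then (n:ℂ) else 0 := by
  obtain ⟨r, hr⟩ := hodd
  have hn : 0 < n := by omega
  have ha : ((n:ℤ)-1)/2 = (r:ℤ) := by omega
  rw [ha]
  have hinj : Function.Injective (fun i : ℕ => (i:ℤ) - r) := fun a b h => by simp only at h; omega
  have hmap : Finset.Icc (-(r:ℤ)) (r:ℤ) =
      Finset.map ⟨fun i : ℕ => (i:ℤ) - r, hinj⟩ (Finset.range n) := by
    ext j
    simp only [Finset.mem_Icc, Finset.mem_map, Finset.mem_range, Function.Embedding.coeFn_mk]
    constructor
    · intro h; exact ⟨(j + r).toNat, by omega, by omega⟩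
    · rintro ⟨i, hi, rfl⟩; omega
  by_cases h0 : t = 0
  · subst h0
    simp [hmap, Finset.sum_const]
  · simp only [if_neg h0]
    set ζ : ℂ := Complex.exp (2 * (Real.pi:ℂ) * Complex.I * ((t:ℂ) / (n:ℂ))) with hζdef
    have hnne : ((n:ℂ)) ≠ 0 := by exact_mod_cast hn.ne'
    have hterm : ∀ j : ℤ, Complex.exp (2 * (Real.pi:ℂ) * Complex.I * (((j * t : ℤ):ℂ) / (n:ℂ)))
        = ζ ^ j := by
      intro j
      rw [hζdef, ← Complex.exp_int_mul]
      congr 1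
      push_cast
      ring
    have hζn : ζ ^ (n:ℕ) = 1 := by
      rw [hζdef, ← Complex.exp_nat_mul]
      have : (n:ℂ) * (2 * (Real.pi:ℂ) * Complex.I * ((t:ℂ) / (n:ℂ)))
          = (t:ℂ) * (2 * Real.pi * Complex.I) := by
        field_simp
      rw [this, Complex.exp_int_mul_two_pi_mul_I]
    have hζ1 : ζ ≠ 1 := by
      intro h
      rw [hζdef, Complex.exp_eq_one_iff] at h
      obtain ⟨m, hm⟩ := h
      have hpi : (2 * (Real.pi:ℂ) * Complex.I) ≠ 0 := by
        simp [Complex.I_ne_zero, Real.pi_ne_zero, Complex.ofReal_ne_zero]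
      have hm' : (2 * (Real.pi:ℂ) * Complex.I) * (t:ℂ) = (2 * (Real.pi:ℂ) * Complex.I) * ((m:ℂ) * (n:ℂ)) := by
        field_simp at hm
        linear_combination (2 * (Real.pi:ℂ) * Complex.I) * hm
      have ht2 : (t:ℂ) = (m:ℂ) * (n:ℂ) := mul_left_cancel₀ hpi hm'
      have ht3 : t = m * n := by exact_mod_cast ht2
      have hm0 : m ≠ 0 := by rintro rfl; simp at ht3; exact h0 ht3
      have h1 : t.natAbs = m.natAbs * n := by rw [ht3, Int.natAbs_mul, Int.natAbs_natCast]
      have h2 : 1 ≤ m.natAbs := Int.natAbs_pos.mpr hm0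
      have h3 : n ≤ m.natAbs * n := Nat.le_mul_of_pos_left n (by omega)
      omega
    have hζ0 : ζ ≠ 0 := Complex.exp_ne_zero _
    calc ∑ j ∈ Finset.Icc (-(r:ℤ)) (r:ℤ),
          Complex.exp (2 * (Real.pi:ℂ) * Complex.I * (((j * t : ℤ):ℂ) / (n:ℂ)))
        = ∑ j ∈ Finset.Icc (-(r:ℤ)) (r:ℤ), ζ ^ j := by
          exact Finset.sum_congr rfl fun j _ => hterm j
      _ = ∑ i ∈ Finset.range n, ζ ^ ((i:ℤ) - r) := by
          rw [hmap, Finset.sum_map]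
          simp only [Function.Embedding.coeFn_mk]
      _ = ζ ^ (-(r:ℤ)) * ∑ i ∈ Finset.range n, ζ ^ i := by
          rw [Finset.mul_sum]
          refine Finset.sum_congr rfl fun i _ => ?_
          rw [← zpow_natCast ζ i, ← zpow_add₀ hζ0]
          congr 1; ring
      _ = 0 := by
          rw [geom_sum_eq hζ1, hζn]
          simp

lemma dft_orth {d : ℕ} (M : Fin d → ℕ) (hodd : ∀ α, Odd (M α)) (t : Fin d → ℤ)
    (ht : ∀ α, (t α).natAbs < M α) :
    ∑ k ∈ ZN M, omegaN M k t = if t = 0 then NPi M else 0 := by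
  have hfact : ∀ k : Fin d → ℤ, omegaN M k t =
      ∏ α, Complex.exp (2*(Real.pi:ℂ)*Complex.I * (((k α * t α:ℤ):ℂ)/(M α:ℂ))) := by
    intro k
    rw [omegaN, Finset.mul_sum, Complex.exp_sum]
  simp_rw [hfact]
  rw [ZN, Pi.Icc_eq,
    ← Finset.prod_univ_sum (fun α => Finset.Icc (-(((M α:ℤ)-1)/2)) (((M α:ℤ)-1)/2))
      (fun α j => Complex.exp (2*(Real.pi:ℂ)*Complex.I * (((j * t α:ℤ):ℂ)/(M α:ℂ))))]
  have hcoord : ∀ α, ∑ j ∈ Finset.Icc (-(((M α:ℤ)-1)/2)) (((M α:ℤ)-1)/2),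
      Complex.exp (2*(Real.pi:ℂ)*Complex.I * (((j * t α:ℤ):ℂ)/(M α:ℂ)))
      = if t α = 0 then ((M α:ℕ):ℂ) else 0 := fun α => dft_one (M α) (hodd α) (t α) (ht α)
  calc (∏ α, ∑ j ∈ Finset.Icc (-(((M α:ℤ)-1)/2)) (((M α:ℤ)-1)/2),
          Complex.exp (2*(Real.pi:ℂ)*Complex.I * (((j * t α:ℤ):ℂ)/(M α:ℂ))))
      = ∏ α, (if t α = 0 then ((M α:ℕ):ℂ) else 0) := Finset.prod_congr rfl fun α _ => hcoord α
    _ = if t = 0 then NPi M else 0 := by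
        by_cases h : t = 0
        · simp [h, NPi]
        · rw [if_neg h]
          obtain ⟨α, hα⟩ : ∃ α, t α ≠ 0 := by
            by_contra hc
            push_neg at hc
            exact h (funext hc)
          exact Finset.prod_eq_zero (Finset.mem_univ α) (if_neg hα)

lemma interp {d : ℕ} (M : Fin d → ℕ) (hodd : ∀ α, Odd (M α)) (j : Fin d → ℤ)
    (hj : j ∈ ZN M) (x : Fin d → ℝ) :
    ∑ k ∈ ZN M, trigPhi j (gridPt M k) * fundTrig M k x = trigPhi j x := by
  have hpos : ∀ α, 0 < M α := fun α => (hodd α).pos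
  have hNPi : NPi M ≠ 0 := by
    rw [NPi]
    exact Finset.prod_ne_zero_iff.mpr fun α _ => Nat.cast_ne_zero.mpr (hpos α).ne'
  have hgrid : ∀ k, trigPhi j (gridPt M k) = omegaN M j k := by
    intro k
    rw [trigPhi, omegaN]
    congr 2
    refine Finset.sum_congr rfl fun α _ => ?_
    rw [gridPt]
    push_cast
    ring
  have homega : ∀ k m : Fin d → ℤ, omegaN M j k * omegaN M (-k) m = omegaN M k (j - m) := by
    intro k m
    rw [omegaN, omegaN, omegaN, ← Complex.exp_add, ← mul_add, ← Finset.sum_add_distrib]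
    congr 2
    refine Finset.sum_congr rfl fun α _ => ?_
    simp only [Pi.neg_apply, Pi.sub_apply]
    push_cast
    ring
  have step1 : ∀ k, trigPhi j (gridPt M k) * fundTrig M k x
      = (1/NPi M) * ∑ m ∈ ZN M, omegaN M k (j - m) * trigPhi m x := by
    intro k
    rw [hgrid, fundTrig, mul_left_comm, Finset.mul_sum]
    congr 1
    refine Finset.sum_congr rfl fun m _ => ?_
    rw [← mul_assoc, homega]
  have hbound : ∀ m ∈ ZN M, ∀ α, ((j - m) α).natAbs < M α := by
    intro m hm α
    rw [ZN, Finset.mem_Icc] at hj hm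
    have h1 := hj.1 α
    have h2 := hj.2 α
    have h3 := hm.1 α
    have h4 := hm.2 α
    simp only at h1 h2 h3 h4
    obtain ⟨r, hr⟩ := hodd α
    have hhalf : ((M α:ℤ) - 1)/2 = r := by omega
    rw [hhalf] at h1 h2 h3 h4
    simp only [Pi.sub_apply]
    omega
  calc ∑ k ∈ ZN M, trigPhi j (gridPt M k) * fundTrig M k x
      = (1/NPi M) * ∑ m ∈ ZN M, (∑ k ∈ ZN M, omegaN M k (j - m)) * trigPhi m x := by
        simp_rw [step1]
        rw [← Finset.mul_sum, Finset.sum_comm]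
        congr 1
        exact Finset.sum_congr rfl fun m _ => (Finset.sum_mul _ _ _).symm
    _ = (1/NPi M) * ∑ m ∈ ZN M, (if j - m = 0 then NPi M else 0) * trigPhi m x := by
        congr 1
        refine Finset.sum_congr rfl fun m hm => ?_
        rw [dft_orth M hodd (j - m) (hbound m hm)]
    _ = (1/NPi M) * (NPi M * trigPhi j x) := by
        congr 1
        rw [Finset.sum_eq_single j]
        · simp
        · intro m hm hne
          rw [if_neg fun h => hne (sub_eq_zero.mp h).symm]
          simp
        · intro h; exact absurd hj h
    _ = trigPhi j x := by
        field_simp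

lemma norm_exp_two_pi (s : ℝ) :
    ‖Complex.exp (2 * (Real.pi:ℂ) * Complex.I * (s:ℂ))‖ = 1 := by
  have h : 2 * (Real.pi:ℂ) * Complex.I * (s:ℂ) = ((2*Real.pi*s : ℝ):ℂ) * Complex.I := by
    push_cast; ring
  rw [h, Complex.norm_exp_ofReal_mul_I]

lemma norm_trigPhi {d : ℕ} (k : Fin d → ℤ) (x : Fin d → ℝ) : ‖trigPhi k x‖ = 1 := by
  rw [trigPhi]
  have h : (∑ α, (k α:ℂ) * (x α:ℂ)) = (((∑ α, (k α:ℝ) * x α : ℝ)):ℂ) := by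
    push_cast; ring
  rw [h, norm_exp_two_pi]

lemma norm_omegaN {d : ℕ} (M : Fin d → ℕ) (m k : Fin d → ℤ) : ‖omegaN M m k‖ = 1 := by
  rw [omegaN]
  have h : (∑ α, ((m α * k α : ℤ):ℂ) / (M α:ℂ))
      = (((∑ α, ((m α * k α : ℤ):ℝ) / (M α:ℝ) : ℝ)):ℂ) := by
    push_cast; ring
  rw [h, norm_exp_two_pi]

lemma cont_trigPhi {d : ℕ} (m : Fin d → ℤ) : Continuous (trigPhi m) := by
  unfold trigPhi
  fun_prop

lemma cont_fundTrig {d : ℕ} (M : Fin d → ℕ) (k : Fin d → ℤ) :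
    Continuous (fundTrig M k) := by
  unfold fundTrig
  refine continuous_const.mul ?_
  exact continuous_finset_sum _ fun m _ => continuous_const.mul (cont_trigPhi m)

lemma norm_fundTrig_le {d : ℕ} (M : Fin d → ℕ) (k : Fin d → ℤ) (x : Fin d → ℝ) :
    ‖fundTrig M k x‖ ≤ ‖1 / NPi M‖ * (ZN M).card := by
  rw [fundTrig, norm_mul]
  refine mul_le_mul_of_nonneg_left ?_ (norm_nonneg _)
  calc ‖∑ m ∈ ZN M, omegaN M (-k) m * trigPhi m x‖
      ≤ ∑ m ∈ ZN M, ‖omegaN M (-k) m * trigPhi m x‖ := norm_sum_le _ _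
    _ = ∑ m ∈ ZN M, 1 := by
        refine Finset.sum_congr rfl fun m _ => ?_
        rw [norm_mul, norm_omegaN, norm_trigPhi, one_mul]
    _ = (ZN M).card := by simp

lemma trigPhi_add {d : ℕ} (a b : Fin d → ℤ) (x : Fin d → ℝ) :
    trigPhi (a + b) x = trigPhi a x * trigPhi b x := by
  rw [trigPhi, trigPhi, trigPhi, ← Complex.exp_add, ← mul_add, ← Finset.sum_add_distrib]
  congr 2
  refine Finset.sum_congr rfl fun α _ => ?_
  simp only [Pi.add_apply]
  push_cast
  ring

/-- exact integration on the double grid `M = 2N−1`: for integrable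
`A : Y → ℂ` and trigonometric polynomials `p, q` of degree `N`,
`∫_Y A p q dx = ∑_{k∈Z_M} (∫_Y A φ_M^k dx) · p(x_M^k) · q(x_M^k)`. -/
theorem exact_integration_double_grid
    (d : ℕ) (hd : 0 < d) (N : Fin d → ℕ)
    (hodd : ∀ α, Odd (N α)) (hpos : ∀ α, 0 < N α)
    (M : Fin d → ℕ) (hM : ∀ α, M α = 2 * N α - 1)
    (A : (Fin d → ℝ) → ℂ) (hA : IntegrableOn A (cellY d))
    (phat qhat : (Fin d → ℤ) → ℂ) (p q : (Fin d → ℝ) → ℂ)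
    (hp : ∀ x, p x = ∑ k ∈ ZN N, phat k * trigPhi k x)
    (hq : ∀ x, q x = ∑ k ∈ ZN N, qhat k * trigPhi k x) :
    ∫ x in cellY d, A x * p x * q x =
      ∑ k ∈ ZN M, (∫ x in cellY d, A x * fundTrig M k x) *
        (p (gridPt M k) * q (gridPt M k)) := by
  have hoddM : ∀ α, Odd (M α) := by
    intro α
    obtain ⟨r, hr⟩ := hodd α
    have hMα := hM α
    exact ⟨2*r, by omega⟩
  -- sums of two indices land in ZN M
  have hmem : ∀ a ∈ ZN N, ∀ b ∈ ZN N, a + b ∈ ZN M := by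
    intro a ha b hb
    rw [ZN, Finset.mem_Icc] at ha hb ⊢
    have ha1 := ha.1
    have ha2 := ha.2
    have hb1 := hb.1
    have hb2 := hb.2
    rw [Pi.le_def] at ha1 ha2 hb1 hb2
    refine ⟨?_, ?_⟩ <;> rw [Pi.le_def] <;> intro α <;>
    · have h1 := ha1 α
      have h2 := ha2 α
      have h3 := hb1 α
      have h4 := hb2 α
      obtain ⟨r, hr⟩ := hodd α
      have hMα := hM α
      simp only [Pi.add_apply] at *
      omega
  -- pointwise product interpolation
  have hsumprod : ∀ y, p y * q y =
      ∑ ab ∈ ZN N ×ˢ ZN N, (phat ab.1 * qhat ab.2) * trigPhi (ab.1 + ab.2) y := by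
    intro y
    rw [hp y, hq y, Finset.sum_mul_sum, ← Finset.sum_product']
    refine Finset.sum_congr rfl fun ab _ => ?_
    rw [trigPhi_add]
    ring
  have key : ∀ x, p x * q x =
      ∑ k ∈ ZN M, (p (gridPt M k) * q (gridPt M k)) * fundTrig M k x := by
    intro x
    rw [hsumprod x]
    calc ∑ ab ∈ ZN N ×ˢ ZN N, (phat ab.1 * qhat ab.2) * trigPhi (ab.1 + ab.2) x
        = ∑ ab ∈ ZN N ×ˢ ZN N, ∑ k ∈ ZN M,
            (phat ab.1 * qhat ab.2) * (trigPhi (ab.1 + ab.2) (gridPt M k) * fundTrig M k x) := by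
          refine Finset.sum_congr rfl fun ab hab => ?_
          rw [Finset.mem_product] at hab
          rw [← Finset.mul_sum, interp M hoddM _ (hmem _ hab.1 _ hab.2) x]
      _ = ∑ k ∈ ZN M, ∑ ab ∈ ZN N ×ˢ ZN N,
            (phat ab.1 * qhat ab.2) * (trigPhi (ab.1 + ab.2) (gridPt M k) * fundTrig M k x) := by
          rw [Finset.sum_comm]
      _ = ∑ k ∈ ZN M, (p (gridPt M k) * q (gridPt M k)) * fundTrig M k x := by
          refine Finset.sum_congr rfl fun k _ => ?_
          rw [hsumprod (gridPt M k), Finset.sum_mul]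
          exact Finset.sum_congr rfl fun ab _ => by ring
  -- pointwise identity for integrand
  have hpt : ∀ x, A x * p x * q x =
      ∑ k ∈ ZN M, (A x * fundTrig M k x) * (p (gridPt M k) * q (gridPt M k)) := by
    intro x
    rw [mul_assoc, key x, Finset.mul_sum]
    exact Finset.sum_congr rfl fun k _ => by ring
  -- integrability
  have hInt : ∀ k : Fin d → ℤ, IntegrableOn (fun x => A x * fundTrig M k x) (cellY d) := by
    intro k
    have h := hA.bdd_mul ((cont_fundTrig M k).aestronglyMeasurable)
      (Filter.Eventually.of_forall fun x => norm_fundTrig_le M k x)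
    exact h.congr (Filter.Eventually.of_forall fun x => mul_comm _ _)
  calc ∫ x in cellY d, A x * p x * q x
      = ∫ x in cellY d, ∑ k ∈ ZN M,
          (A x * fundTrig M k x) * (p (gridPt M k) * q (gridPt M k)) := by
        exact integral_congr_ae (Filter.Eventually.of_forall fun x => hpt x)
    _ = ∑ k ∈ ZN M, ∫ x in cellY d,
          (A x * fundTrig M k x) * (p (gridPt M k) * q (gridPt M k)) := by
        exact integral_finset_sum _ fun k _ => (hInt k).mul_const _
    _ = ∑ k ∈ ZN M, (∫ x in cellY d, A x * fundTrig M k x) *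
          (p (gridPt M k) * q (gridPt M k)) := by
        exact Finset.sum_congr rfl fun k _ => integral_mul_const _ _
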